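/- Let a > 0 and ω ∈ ℝ. Then the limit as Δ → 0⁺ of |a / (a − ω² Δ² + i ω Δ)|^{1/Δ} exists and equals 1, where | · | denotes the complex modulus. That is, in the nonstandard car-following model, in which the relaxation time equals the vehicle-discretization step, a small monochromatic disturbance in a leading vehicle's speed is not amplified along the traffic stream: the per-unit-vehicle amplification factor is exactly 1, so the model is linearly (string) stable. -/

import Mathlib

open Real Filter

/-- Linear (string) stability of the nonstandard car-following model, in which the
relaxation time equals the vehicle-discretization step: the per-unit-vehicle
amplification factor `lim_{Δ→0⁺} |a/(a − ω²Δ² + iωΔ)|^{1/Δ}` is exactly 1. -/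
theorem nonstandard_model_string_stable (a ω : ℝ) (ha : 0 < a) :
    Filter.Tendsto
      (fun Δ : ℝ =>
        (‖(a : ℂ) /
          (((a - ω ^ 2 * Δ ^ 2 : ℝ) : ℂ) + ((ω * Δ : ℝ) : ℂ) * Complex.I)‖) ^ (1 / Δ))
      (nhdsWithin 0 (Set.Ioi 0)) (nhds 1) := by
  set p : ℝ → ℝ := fun Δ => (a - ω ^ 2 * Δ ^ 2) ^ 2 + (ω * Δ) ^ 2 with hp
  have hp0 : p 0 = a ^ 2 := by simp [hp]
  have hpc : Continuous p := by fun_prop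
  have hp0pos : 0 < p 0 := by rw [hp0]; positivity
  -- eventually p Δ > 0 near 0 from the right
  have hpev : ∀ᶠ Δ in nhdsWithin 0 (Set.Ioi 0), 0 < p Δ :=
    ((hpc.tendsto 0).eventually (eventually_gt_nhds hp0pos)).filter_mono
      nhdsWithin_le_nhds
  -- derivative of log ∘ p at 0 is 0
  have hx : HasDerivAt (fun Δ : ℝ => Δ) 1 0 := hasDerivAt_id 0
  have hsq : HasDerivAt (fun Δ : ℝ => Δ ^ 2) 0 0 := by simpa using hx.fun_pow 2
  have hA : HasDerivAt (fun Δ : ℝ => a - ω ^ 2 * Δ ^ 2) 0 0 := by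
    simpa using (hsq.const_mul (ω ^ 2)).const_sub a
  have hA2 : HasDerivAt (fun Δ : ℝ => (a - ω ^ 2 * Δ ^ 2) ^ 2) 0 0 := by
    simpa using hA.fun_pow 2
  have hB : HasDerivAt (fun Δ : ℝ => (ω * Δ) ^ 2) 0 0 := by
    simpa using (hx.const_mul ω).fun_pow 2
  have hP : HasDerivAt p 0 0 := by simpa [hp] using hA2.fun_add hB
  have hlog : HasDerivAt (fun Δ => Real.log (p Δ)) 0 0 := by
    simpa using hP.log (ne_of_gt hp0pos)
  have hslope : Tendsto (slope (fun Δ => Real.log (p Δ)) 0)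
      (nhdsWithin 0 (Set.Ioi 0)) (nhds 0) :=
    (hasDerivAt_iff_tendsto_slope.mp hlog).mono_left
      (nhdsWithin_mono 0 (fun x hx => ne_of_gt hx))
  have hexp : Tendsto (fun Δ => Real.exp ((-(1/2)) * slope (fun t => Real.log (p t)) 0 Δ))
      (nhdsWithin 0 (Set.Ioi 0)) (nhds 1) := by
    have := (Real.continuous_exp.tendsto 0).comp (by simpa using hslope.const_mul (-(1/2)))
    simpa [Function.comp_def] using this
  refine hexp.congr' ?_
  filter_upwards [hpev, self_mem_nhdsWithin] with Δ hpΔ hΔ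
  have hΔ0 : (0:ℝ) < Δ := hΔ
  have hsqrt : 0 < Real.sqrt (p Δ) := Real.sqrt_pos.mpr hpΔ
  have habs : ‖(a : ℂ) /
      (((a - ω ^ 2 * Δ ^ 2 : ℝ) : ℂ) + ((ω * Δ : ℝ) : ℂ) * Complex.I)‖
      = a / Real.sqrt (p Δ) := by
    rw [norm_div, Complex.norm_real, Real.norm_eq_abs, Complex.norm_add_mul_I, abs_of_pos ha]
  have hrpos : 0 < a / Real.sqrt (p Δ) := div_pos ha hsqrt
  rw [habs, Real.rpow_def_of_pos hrpos, Real.log_div (ne_of_gt ha) (ne_of_gt hsqrt),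
    Real.log_sqrt hpΔ.le]
  congr 1
  rw [slope_def_field, hp0, Real.log_pow]
  push_cast
  field_simp [hΔ0.ne']
  ring
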